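/- Suppose A tiles ℤ with period M (i.e., there is B with A ⊕ B ⊕ Mℤ = ℤ), and M = m·M' where M' has the same prime factors as |A| and gcd(m, |A|) = 1. Then A tiles ℤ with period M', i.e., there exists B' with A ⊕ B' ⊕ M'ℤ = ℤ. -/

import Mathlib

open Finset AddMonoidAlgebra

namespace Stmt15

def SS (A B : Finset ℤ) (N : ℕ) (r : ℤ) (n : ZMod N) : Finset (ℤ × ℤ) :=
  (A ×ˢ B).filter (fun q => ((r * q.1 + q.2 : ℤ) : ZMod N) = n)

lemma mem_SS {A B : Finset ℤ} {N : ℕ} {r : ℤ} {n : ZMod N} {q : ℤ × ℤ} :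
    q ∈ SS A B N r n ↔ q.1 ∈ A ∧ q.2 ∈ B ∧ ((r * q.1 + q.2 : ℤ) : ZMod N) = n := by
  simp [SS, Finset.mem_filter, Finset.mem_product, and_assoc]

lemma card_SS_eq_one {A B : Finset ℤ} {N : ℕ} {r : ℤ} {n : ZMod N} :
    (SS A B N r n).card = 1 ↔
      ∃! q : ℤ × ℤ, q.1 ∈ A ∧ q.2 ∈ B ∧ ((r * q.1 + q.2 : ℤ) : ZMod N) = n := by
  rw [Finset.card_eq_one]
  constructor
  · rintro ⟨q, hq⟩
    refine ⟨q, mem_SS.1 (hq ▸ Finset.mem_singleton_self q), fun y hy => ?_⟩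
    have : y ∈ SS A B N r n := mem_SS.2 hy
    rw [hq, Finset.mem_singleton] at this; exact this
  · rintro ⟨q, hq, huniq⟩
    exact ⟨q, Finset.eq_singleton_iff_unique_mem.2 ⟨mem_SS.2 hq, fun y hy => huniq y (mem_SS.1 hy)⟩⟩

variable {p N : ℕ}

abbrev R (p N : ℕ) := AddMonoidAlgebra (ZMod p) (ZMod N)

noncomputable def EE (A : Finset ℤ) (p N : ℕ) (r : ℤ) : R p N :=
  ∑ a ∈ A, AddMonoidAlgebra.single ((r * a : ℤ) : ZMod N) (1 : ZMod p)

noncomputable def uu (p N : ℕ) [NeZero N] : R p N :=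
  ∑ n : ZMod N, AddMonoidAlgebra.single n (1 : ZMod p)

lemma charP_R (p N : ℕ) : CharP (R p N) p := by
  have h : Function.Injective (AddMonoidAlgebra.singleZeroRingHom (R := ZMod p) (M := ZMod N)) := by
    intro a b hab
    simpa using congrArg (fun f : R p N => f.coeff 0) hab
  exact charP_of_injective_ringHom h p

lemma uu_apply [NeZero N] (n : ZMod N) : (uu p N).coeff n = 1 := by
  rw [uu, AddMonoidAlgebra.coeff_sum, Finsupp.finset_sum_apply]
  simp only [AddMonoidAlgebra.coeff_single]
  simp [Finsupp.single_apply]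

lemma single_mul_uu [NeZero N] (x : ZMod N) (c : ZMod p) :
    AddMonoidAlgebra.single x c * uu p N = c • uu p N := by
  rw [uu, Finset.mul_sum]
  simp only [AddMonoidAlgebra.single_mul_single, mul_one]
  have : ∑ i : ZMod N, (AddMonoidAlgebra.single (x + i) c : R p N)
      = ∑ i : ZMod N, (AddMonoidAlgebra.single i c : R p N) :=
    Fintype.sum_equiv (Equiv.addLeft x)
      (fun i => (AddMonoidAlgebra.single (x + i) c : R p N))
      (fun n => (AddMonoidAlgebra.single n c : R p N)) (fun i => by simp)
  rw [this, Finset.smul_sum]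
  refine Finset.sum_congr rfl (fun i _ => ?_)
  simp [Finsupp.smul_single]

lemma EE_mul_uu [NeZero N] (A : Finset ℤ) (r : ℤ) :
    EE A p N r * uu p N = (A.card : ZMod p) • uu p N := by
  rw [EE, Finset.sum_mul]
  simp only [single_mul_uu]
  rw [← Finset.sum_smul]
  simp

lemma EE_pow_mul_uu [NeZero N] (A : Finset ℤ) (r : ℤ) (k : ℕ) :
    EE A p N r ^ k * uu p N = ((A.card : ZMod p) ^ k) • uu p N := by
  induction k with
  | zero => simp
  | succ k ih =>
    rw [pow_succ', mul_assoc, ih, mul_smul_comm, EE_mul_uu, smul_smul, pow_succ, mul_comm]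

lemma EE_mul_EE_apply [NeZero N] (A B : Finset ℤ) (r : ℤ) (n : ZMod N) :
    (EE A p N r * EE B p N 1).coeff n = ((SS A B N r n).card : ZMod p) := by
  rw [EE, EE, Finset.sum_mul_sum]
  simp only [AddMonoidAlgebra.single_mul_single, one_mul]
  rw [SS, Finset.card_filter]
  push_cast
  rw [← Finset.sum_product']
  rw [AddMonoidAlgebra.coeff_sum, Finsupp.finset_sum_apply]
  refine Finset.sum_congr rfl (fun q _ => ?_)
  rw [AddMonoidAlgebra.coeff_single, Finsupp.single_apply]

end Stmt15

namespace Stmt15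

open Finset AddMonoidAlgebra

variable {p N : ℕ}

lemma sum_card_SS (A B : Finset ℤ) (N : ℕ) [NeZero N] (r : ℤ) :
    ∑ n : ZMod N, (SS A B N r n).card = A.card * B.card := by
  have h : ∀ n : ZMod N, (SS A B N r n).card
      = ∑ q ∈ A ×ˢ B, if ((r * q.1 + q.2 : ℤ) : ZMod N) = n then 1 else 0 := by
    intro n
    rw [SS, Finset.card_filter]
  simp only [h]
  rw [Finset.sum_comm]
  rw [← Finset.card_product A B]
  have h2 : ∀ q : ℤ × ℤ, (∑ x : ZMod N, if ((r * q.1 + q.2 : ℤ) : ZMod N) = x then 1 else 0) = 1 := by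
    intro q
    simp
  simp only [h2]
  simp

lemma EE_pow_char [NeZero N] (A : Finset ℤ) (hp : p.Prime) :
    EE A p N 1 ^ p = EE A p N (p : ℤ) := by
  haveI := charP_R p N
  haveI := Fact.mk hp
  rw [EE, EE, sum_pow_char]
  refine Finset.sum_congr rfl (fun a _ => ?_)
  rw [AddMonoidAlgebra.single_pow, one_pow, nsmul_eq_mul]
  congr 1
  push_cast
  ring

lemma EE_mul_EB [NeZero N] {A B : Finset ℤ} (h1 : ∀ n, (SS A B N 1 n).card = 1) :
    EE A p N 1 * EE B p N 1 = uu p N := by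
  ext n
  rw [EE_mul_EE_apply, h1, uu_apply]
  simp

lemma card_SS_prime {A B : Finset ℤ} [NeZero N] (hp : p.Prime) (hpA : ¬ p ∣ A.card)
    (h1 : ∀ n, (SS A B N 1 n).card = 1) : ∀ n, (SS A B N (p : ℤ) n).card = 1 := by
  haveI := Fact.mk hp
  have hN : A.card * B.card = N := by
    have := sum_card_SS A B N 1
    simp only [h1] at this
    rw [Finset.sum_const, Finset.card_univ, ZMod.card, smul_eq_mul, mul_one] at this
    omega
  have modp : ∀ n : ZMod N, ((SS A B N (p : ℤ) n).card : ZMod p) = 1 := by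
    intro n
    rw [← EE_mul_EE_apply, ← EE_pow_char A hp]
    have hsplit : EE A p N 1 ^ p * EE B p N 1
        = EE A p N 1 ^ (p - 1) * (EE A p N 1 * EE B p N 1) := by
      have hp1 : p - 1 + 1 = p := Nat.succ_pred_eq_of_pos hp.pos
      rw [← mul_assoc, ← pow_succ, hp1]
    rw [hsplit, EE_mul_EB h1, EE_pow_mul_uu, AddMonoidAlgebra.coeff_smul_apply, uu_apply, smul_eq_mul, mul_one]
    refine ZMod.pow_card_sub_one_eq_one ?_
    rw [Ne, ZMod.natCast_eq_zero_iff]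
    exact hpA
  have pos : ∀ n : ZMod N, 1 ≤ (SS A B N (p : ℤ) n).card := by
    intro n
    rcases Nat.eq_zero_or_pos (SS A B N (p : ℤ) n).card with h | h
    · exfalso
      have := modp n
      rw [h] at this
      simp at this
    · exact h
  have hsum : ∑ n : ZMod N, (SS A B N (p : ℤ) n).card = ∑ _n : ZMod N, 1 := by
    rw [sum_card_SS, hN, Finset.sum_const, Finset.card_univ, ZMod.card, smul_eq_mul, mul_one]
  intro n
  by_contra hne
  have h2 : 1 < (SS A B N (p : ℤ) n).card := lt_of_le_of_ne (pos n) (Ne.symm hne)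
  have : ∑ _n : ZMod N, 1 < ∑ n : ZMod N, (SS A B N (p : ℤ) n).card :=
    Finset.sum_lt_sum (fun i _ => pos i) ⟨n, Finset.mem_univ n, h2⟩
  omega

end Stmt15

namespace Stmt15

open Finset

lemma card_SS_image {A B : Finset ℤ} {N : ℕ} (p : ℤ) (hp : p ≠ 0) (r : ℤ) (n : ZMod N) :
    (SS (A.image (fun a => p * a)) B N r n).card = (SS A B N (r * p) n).card := by
  refine (Finset.card_bij (fun q _ => ((p * q.1, q.2) : ℤ × ℤ)) ?_ ?_ ?_).symm
  · rintro q hq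
    obtain ⟨h1, h2, h3⟩ := mem_SS.1 hq
    refine mem_SS.2 ⟨Finset.mem_image_of_mem _ h1, h2, ?_⟩
    show ((r * (p * q.1) + q.2 : ℤ) : ZMod N) = n
    rw [← h3]
    congr 1
    ring
  · rintro q hq q' hq' h
    obtain ⟨h1, h2⟩ := Prod.mk.injEq _ _ _ _ ▸ h
    exact Prod.ext (mul_left_cancel₀ hp h1) h2
  · rintro q hq
    obtain ⟨h1, h2, h3⟩ := mem_SS.1 hq
    obtain ⟨a, ha, hpa⟩ := Finset.mem_image.1 h1
    refine ⟨(a, q.2), mem_SS.2 ⟨ha, h2, ?_⟩, ?_⟩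
    · show ((r * p * a + q.2 : ℤ) : ZMod N) = n
      rw [← h3, ← hpa]
      congr 1
      ring
    · show ((p * a, q.2) : ℤ × ℤ) = q
      rw [hpa]

lemma card_SS_coprime (B : Finset ℤ) (N : ℕ) [NeZero N] :
    ∀ (m : ℕ) (A : Finset ℤ), m ≠ 0 → Nat.Coprime m A.card →
      (∀ n, (SS A B N 1 n).card = 1) → ∀ n, (SS A B N (m : ℤ) n).card = 1 := by
  intro m
  induction m using Nat.strong_induction_on with
  | _ m ih =>
    intro A hm hcop h1
    rcases eq_or_ne m 1 with rfl | hm1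
    · simpa using h1
    · set q := m.minFac with hqdef
      have hq : q.Prime := Nat.minFac_prime hm1
      have hqm : q ∣ m := Nat.minFac_dvd m
      have hqA : ¬ q ∣ A.card := by
        intro hdvd
        have : q ∣ 1 := hcop ▸ Nat.dvd_gcd hqm hdvd
        exact hq.one_lt.ne' (Nat.dvd_one.1 this)
      have hp1 : ∀ n, (SS A B N (q : ℤ) n).card = 1 := card_SS_prime hq hqA h1
      set A' := A.image (fun a => (q : ℤ) * a) with hA'
      have hqz : (q : ℤ) ≠ 0 := by exact_mod_cast hq.ne_zero
      have hcard : A'.card = A.card :=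
        Finset.card_image_of_injective _ (mul_right_injective₀ hqz)
      have h1' : ∀ n, (SS A' B N 1 n).card = 1 := by
        intro n
        rw [hA', card_SS_image (q : ℤ) hqz 1 n, one_mul]
        exact hp1 n
      have hlt : m / q < m := Nat.div_lt_self (Nat.pos_of_ne_zero hm) hq.one_lt
      have hne : m / q ≠ 0 := by
        intro h
        have := Nat.div_mul_cancel hqm
        rw [h, zero_mul] at this
        exact hm this.symm
      have hcop' : Nat.Coprime (m / q) A'.card := by
        rw [hcard]
        exact Nat.Coprime.coprime_dvd_left (Nat.div_dvd_of_dvd hqm) hcop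
      have ihm := ih (m / q) hlt A' hne hcop' h1'
      intro n
      have := ihm n
      rw [hA', card_SS_image (q : ℤ) hqz _ n] at this
      have hmq : ((m / q : ℕ) : ℤ) * (q : ℤ) = (m : ℤ) := by
        exact_mod_cast congrArg (Nat.cast : ℕ → ℤ) (Nat.div_mul_cancel hqm)
      rwa [hmq] at this

end Stmt15

open Stmt15
/-- Coven–Meyerowitz reduction: if `A ⊕ B ⊕ Mℤ = ℤ` with `M = m·M'`, where `M'` has the
same prime factors as `|A|` and `gcd(m,|A|) = 1`, then `A` tiles with period `M'`. -/
theorem stmt15 (A B : Finset ℤ) (M M' m : ℕ)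
    (htile : ∀ n : ℤ, ∃! t : ℤ × ℤ × ℤ,
      t.1 ∈ A ∧ t.2.1 ∈ B ∧ t.1 + t.2.1 + (M : ℤ) * t.2.2 = n)
    (hfac : M = m * M')
    (hprimes : M'.primeFactors = A.card.primeFactors)
    (hcop : Nat.Coprime m A.card) :
    ∃ B' : Finset ℤ, ∀ n : ℤ, ∃! t : ℤ × ℤ × ℤ,
      t.1 ∈ A ∧ t.2.1 ∈ B' ∧ t.1 + t.2.1 + (M' : ℤ) * t.2.2 = n := by
  -- M ≠ 0
  have hM : M ≠ 0 := by
    intro hM0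
    obtain ⟨t, ht, hu⟩ := htile 0
    have ht' : (t.1, t.2.1, t.2.2 + 1).1 ∈ A ∧ (t.1, t.2.1, t.2.2 + 1).2.1 ∈ B ∧
        (t.1, t.2.1, t.2.2 + 1).1 + (t.1, t.2.1, t.2.2 + 1).2.1
          + (M : ℤ) * (t.1, t.2.1, t.2.2 + 1).2.2 = 0 := by
      refine ⟨ht.1, ht.2.1, ?_⟩
      have := ht.2.2
      simp only [hM0, Nat.cast_zero, zero_mul] at this ⊢
      simpa using this
    have := hu _ ht'
    have h2 := congrArg (fun t : ℤ × ℤ × ℤ => t.2.2) this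
    simp at h2
  haveI : NeZero M := ⟨hM⟩
  have hm0 : m ≠ 0 := by intro h; exact hM (by rw [hfac, h, zero_mul])
  have hM'0 : M' ≠ 0 := by intro h; exact hM (by rw [hfac, h, mul_zero])
  -- base tiling mod M
  have h1 : ∀ n : ZMod M, (SS A B M 1 n).card = 1 := by
    intro n
    obtain ⟨x, rfl⟩ : ∃ x : ℤ, (x : ZMod M) = n :=
      ⟨(n.val : ℤ), by rw [Int.cast_natCast]; exact ZMod.natCast_rightInverse n⟩
    obtain ⟨⟨a, b, k⟩, ⟨ha, hb, habk⟩, hu⟩ := htile x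
    rw [card_SS_eq_one]
    refine ⟨(a, b), ⟨ha, hb, ?_⟩, ?_⟩
    · rw [← habk]
      push_cast
      simp [ZMod.natCast_self]
    · rintro ⟨a', b'⟩ ⟨ha', hb', hab'⟩
      have hmod : (1 * a' + b' : ℤ) ≡ x [ZMOD (M : ℤ)] := (ZMod.intCast_eq_intCast_iff _ _ _).1 hab'
      obtain ⟨j, hj⟩ := Int.ModEq.dvd hmod
      -- x - (1*a'+b') = M * j, so a' + b' + M*j = x
      have htrip : a' + b' + (M : ℤ) * j = x := by linarith [hj]
      have := hu (a', b', j) ⟨ha', hb', htrip⟩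
      have e1 := congrArg (fun t : ℤ × ℤ × ℤ => t.1) this
      have e2 := congrArg (fun t : ℤ × ℤ × ℤ => t.2.1) this
      simp at e1 e2
      simp [e1, e2]
  -- dilated tiling mod M
  have hm1 : ∀ n : ZMod M, (SS A B M (m : ℤ) n).card = 1 :=
    card_SS_coprime B M m A hm0 hcop h1
  -- build B'
  refine ⟨(B.filter (fun b => (m : ℤ) ∣ b)).image (fun b : ℤ => b / (m : ℤ)), ?_⟩
  intro n
  obtain ⟨⟨a, b⟩, ⟨ha, hb, hab⟩, huniq⟩ :=
    card_SS_eq_one.1 (hm1 (((m : ℤ) * n : ℤ) : ZMod M))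
  have hmod : ((m : ℤ) * a + b : ℤ) ≡ (m : ℤ) * n [ZMOD (M : ℤ)] :=
    (ZMod.intCast_eq_intCast_iff _ _ _).1 hab
  obtain ⟨j, hj⟩ := Int.ModEq.dvd hmod
  -- m*n - (m*a+b) = M*j
  have hMc : (M : ℤ) = (m : ℤ) * (M' : ℤ) := by exact_mod_cast congrArg (Nat.cast : ℕ → ℤ) hfac
  have hbval : b = (m : ℤ) * (n - a - (M' : ℤ) * j) := by
    rw [hMc] at hj
    linarith [hj]
  have hmz : (m : ℤ) ≠ 0 := by exact_mod_cast hm0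
  have hM'z : (M' : ℤ) ≠ 0 := by exact_mod_cast hM'0
  set b' : ℤ := n - a - (M' : ℤ) * j with hb'def
  have hbdvd : (m : ℤ) ∣ b := ⟨b', hbval⟩
  have hbdiv : b / (m : ℤ) = b' := by rw [hbval]; exact Int.mul_ediv_cancel_left _ hmz
  have hb'mem : b' ∈ (B.filter (fun b => (m : ℤ) ∣ b)).image (fun b : ℤ => b / (m : ℤ)) :=
    Finset.mem_image.2 ⟨b, Finset.mem_filter.2 ⟨hb, hbdvd⟩, hbdiv⟩
  refine ⟨(a, b', j), ⟨ha, hb'mem, by rw [hb'def]; ring⟩, ?_⟩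
  rintro ⟨a₁, b₁', k₁⟩ ⟨ha₁, hb₁', htrip₁⟩
  simp only at ha₁ hb₁' htrip₁
  obtain ⟨b₁, hb₁mem, hb₁div⟩ := Finset.mem_image.1 hb₁'
  obtain ⟨hb₁B, hb₁dvd⟩ := Finset.mem_filter.1 hb₁mem
  have hb₁val : b₁ = (m : ℤ) * b₁' := by
    obtain ⟨c, hc⟩ := hb₁dvd
    rw [hc] at hb₁div ⊢
    rw [Int.mul_ediv_cancel_left _ hmz] at hb₁div
    rw [hb₁div]
  -- (a₁, b₁) also represents m*n mod M
  have hd : (M : ℤ) ∣ ((m : ℤ) * n - ((m : ℤ) * a₁ + b₁)) := by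
    refine ⟨k₁, ?_⟩
    rw [hb₁val, hMc]
    linear_combination (-(m : ℤ)) * htrip₁
  have hcast : (((m : ℤ) * a₁ + b₁ : ℤ) : ZMod M) = (((m : ℤ) * n : ℤ) : ZMod M) := by
    rw [ZMod.intCast_eq_intCast_iff]
    exact Int.modEq_iff_dvd.2 hd
  have heq := huniq (a₁, b₁) ⟨ha₁, hb₁B, hcast⟩
  have e1 : a₁ = a := by simpa using congrArg Prod.fst heq
  have e2 : b₁ = b := by simpa using congrArg Prod.snd heq
  have e3 : b₁' = b' := by rw [← hb₁div, e2, hbdiv]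
  have e4 : k₁ = j := by
    have ht' : a + b' + (M' : ℤ) * k₁ = n := by rw [← e1, ← e3]; exact htrip₁
    have ht2 : a + b' + (M' : ℤ) * j = n := by rw [hb'def]; ring
    have h5 : (M' : ℤ) * k₁ = (M' : ℤ) * j := by linarith
    exact mul_left_cancel₀ hM'z h5
  simp [e1, e3, e4]
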